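/- Fix integers n ≥ 1, d ≥ 1, τ ≥ 1, constants L > 0, β ≥ 1, κ ≥ 0, ζ_1, …, ζ_n ≥ 0, a learning rate η > 0, and a point θ ∈ ℝ^d. Let f_1, …, f_n : ℝ^d → ℝ be differentiable with L-Lipschitz gradients, set f := (1/n)·Σ_{i=1}^n f_i, and suppose (1/n)·Σ_{i=1}^n ‖∇f_i(x)‖² ≤ β²·‖∇f(x)‖² + κ² for all x ∈ ℝ^d. On a probability space with a filtration (ℱ_s)_{s=0,…,τ}, let random vectors θ_i^s and g_i^s satisfy: θ_i^0 = θ; θ_i^{s+1} = θ_i^s − η·g_i^s; θ_i^s is ℱ_s-measurable; E[g_i^s | ℱ_s] = ∇f_i(θ_i^s) almost surely; E‖g_i^s − ∇f_i(θ_i^s)‖² ≤ ζ_i²; and all θ_i^s, g_i^s are square-integrable. Define the averaged local update d_i := (1/τ)·Σ_{s=0}^{τ−1} g_i^s. Then (1/n)·Σ_{i=1}^n E‖d_i‖² ≤ (2·L²/(n·τ))·Σ_{i=1}^n Σ_{s=0}^{τ−1} E‖θ − θ_i^s‖² + 2·(β²·‖∇f(θ)‖² + κ²) + ζ̄², where ζ̄²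 := (1/n)·Σ_{i=1}^n ζ_i². -/

import Mathlib

open MeasureTheory

section Helpers

variable {Ω : Type*}

private lemma blmu_mulIntegrable {m0 : MeasurableSpace Ω} {μ : Measure Ω} {f g : Ω → ℝ}
    (hf : MemLp f 2 μ) (hg : MemLp g 2 μ) : Integrable (fun ω => f ω * g ω) μ := by
  have h := hf.smul (φ := g) hg (p := 2) (q := 2) (r := 1)
  rw [memLp_one_iff_integrable] at h
  have h' : Integrable (f * g) μ := by simpa [smul_eq_mul, mul_comm] using h
  exact h'

private lemma blmu_innerIntegrable {m0 : MeasurableSpace Ω} {μ : Measure Ω} {d : ℕ}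
    {X Y : Ω → EuclideanSpace ℝ (Fin d)} (hX : MemLp X 2 μ) (hY : MemLp Y 2 μ) :
    Integrable (fun ω => (inner ℝ (X ω) (Y ω) : ℝ)) μ := by
  refine (L2.integrable_inner (𝕜 := ℝ) (hX.toLp X) (hY.toLp Y)).congr ?_
  filter_upwards [hX.coeFn_toLp, hY.coeFn_toLp] with ω h1 h2
  rw [h1, h2]

private lemma blmu_normSqIntegrable {m0 : MeasurableSpace Ω} {μ : Measure Ω} {d : ℕ}
    {X : Ω → EuclideanSpace ℝ (Fin d)} (hX : MemLp X 2 μ) :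
    Integrable (fun ω => ‖X ω‖ ^ 2) μ := by
  refine (blmu_innerIntegrable hX hX).congr ?_
  filter_upwards with ω using (real_inner_self_eq_norm_sq _)

private lemma blmu_coordMemℒp {m0 : MeasurableSpace Ω} {μ : Measure Ω} {d : ℕ}
    {X : Ω → EuclideanSpace ℝ (Fin d)} (hX : MemLp X 2 μ) (j : Fin d) :
    MemLp (fun ω => X ω j) 2 μ := by
  exact (EuclideanSpace.proj (𝕜 := ℝ) j).comp_memLp' hX

private lemma blmu_condexp_coord {m m0 : MeasurableSpace Ω} (hm : m ≤ m0) {μ : Measure Ω}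
    [IsFiniteMeasure μ] {d : ℕ} {X : Ω → EuclideanSpace ℝ (Fin d)}
    (hX : Integrable X μ) (j : Fin d) :
    (fun ω => (μ[X|m]) ω j) =ᵐ[μ] μ[fun ω => X ω j|m] := by
  haveI : SigmaFinite (μ.trim hm) := by
    have : IsFiniteMeasure (μ.trim hm) := isFiniteMeasure_trim hm
    infer_instance
  refine ae_eq_condExp_of_forall_setIntegral_eq hm
    ((EuclideanSpace.proj (𝕜 := ℝ) j).integrable_comp hX)
    (fun s _ _ => ((EuclideanSpace.proj (𝕜 := ℝ) j).integrable_comp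
      (integrable_condExp (f := X))).integrableOn)
    (fun s hs hμs => ?_)
    (StronglyMeasurable.aestronglyMeasurable (m := m)
      ((EuclideanSpace.proj (𝕜 := ℝ) j).continuous.comp_stronglyMeasurable
      (stronglyMeasurable_condExp (m := m) (μ := μ) (f := X))))
  have h1 : ∫ x in s, (μ[X|m]) x ∂μ = ∫ x in s, X x ∂μ := setIntegral_condExp hm hX hs
  have h2 := (EuclideanSpace.proj (𝕜 := ℝ) j).integral_comp_comm
    (μ := μ.restrict s) (φ := μ[X|m]) (integrable_condExp (m := m)).integrableOn
  have h3 := (EuclideanSpace.proj (𝕜 := ℝ) j).integral_comp_comm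
    (μ := μ.restrict s) (φ := X) hX.integrableOn
  simp only [EuclideanSpace.proj, PiLp.proj_apply] at h2 h3
  rw [h2, h1, ← h3]

private lemma blmu_integral_inner_eq_norm_sq {m m0 : MeasurableSpace Ω} (hm : m ≤ m0)
    {μ : Measure Ω} [IsProbabilityMeasure μ] {d : ℕ}
    {X Y : Ω → EuclideanSpace ℝ (Fin d)}
    (hX : MemLp X 2 μ) (hY : MemLp Y 2 μ) (hYm : StronglyMeasurable[m] Y)
    (hcond : μ[X|m] =ᵐ[μ] Y) :
    ∫ ω, (inner ℝ (X ω) (Y ω) : ℝ) ∂μ = ∫ ω, ‖Y ω‖ ^ 2 ∂μ := by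
  haveI : SigmaFinite (μ.trim hm) := by
    have : IsFiniteMeasure (μ.trim hm) := isFiniteMeasure_trim hm
    infer_instance
  have hXj := fun j => blmu_coordMemℒp hX j
  have hYj := fun j => blmu_coordMemℒp hY j
  have hmulXY : ∀ j, Integrable (fun ω => Y ω j * X ω j) μ :=
    fun j => blmu_mulIntegrable (hYj j) (hXj j)
  have hmulYY : ∀ j, Integrable (fun ω => Y ω j * Y ω j) μ :=
    fun j => blmu_mulIntegrable (hYj j) (hYj j)
  have hYjm : ∀ j, StronglyMeasurable[m] (fun ω => Y ω j) :=
    fun j => (EuclideanSpace.proj (𝕜 := ℝ) j).continuous.comp_stronglyMeasurable hYm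
  have key : ∀ j : Fin d, ∫ ω, X ω j * Y ω j ∂μ = ∫ ω, Y ω j * Y ω j ∂μ := by
    intro j
    have hpull := condExp_mul_of_stronglyMeasurable_left (μ := μ) (hYjm j)
      (hmulXY j) ((hXj j).integrable one_le_two)
    have hcoord : μ[fun ω => X ω j|m] =ᵐ[μ] fun ω => Y ω j := by
      refine (blmu_condexp_coord hm (memLp_one_iff_integrable.mp
        (hX.mono_exponent one_le_two)) j).symm.trans ?_
      filter_upwards [hcond] with ω hω using by rw [hω]
    have h1 : ∫ ω, ((fun ω => Y ω j) * fun ω => X ω j) ω ∂μ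
        = ∫ ω, (μ[(fun ω => Y ω j) * fun ω => X ω j|m]) ω ∂μ :=
      (integral_condExp hm).symm
    calc ∫ ω, X ω j * Y ω j ∂μ = ∫ ω, ((fun ω => Y ω j) * fun ω => X ω j) ω ∂μ := by
          simp [mul_comm]
      _ = ∫ ω, (μ[(fun ω => Y ω j) * fun ω => X ω j|m]) ω ∂μ := h1
      _ = ∫ ω, ((fun ω => Y ω j) * μ[fun ω => X ω j|m]) ω ∂μ :=
          integral_congr_ae hpull
      _ = ∫ ω, Y ω j * Y ω j ∂μ := by
          refine integral_congr_ae ?_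
          filter_upwards [hcoord] with ω hω
          simp [hω]
  calc ∫ ω, (inner ℝ (X ω) (Y ω) : ℝ) ∂μ = ∫ ω, ∑ j, X ω j * Y ω j ∂μ := by
        refine integral_congr_ae (Filter.Eventually.of_forall fun ω => ?_)
        simp [PiLp.inner_apply, RCLike.inner_apply, conj_trivial]
        exact Finset.sum_congr rfl fun _ _ => mul_comm _ _
    _ = ∑ j, ∫ ω, X ω j * Y ω j ∂μ :=
        integral_finset_sum _ (fun j _ => blmu_mulIntegrable (hXj j) (hYj j))
    _ = ∑ j, ∫ ω, Y ω j * Y ω j ∂μ := Finset.sum_congr rfl fun j _ => key j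
    _ = ∫ ω, ∑ j, Y ω j * Y ω j ∂μ :=
        (integral_finset_sum _ (fun j _ => hmulYY j)).symm
    _ = ∫ ω, ‖Y ω‖ ^ 2 ∂μ := by
        refine integral_congr_ae (Filter.Eventually.of_forall fun ω => ?_)
        simp only
        rw [← real_inner_self_eq_norm_sq]
        simp [PiLp.inner_apply, RCLike.inner_apply, conj_trivial]
        rw [EuclideanSpace.norm_sq_eq]
        exact Finset.sum_congr rfl fun _ _ => by rw [Real.norm_eq_abs, sq_abs, sq]

/-- Orthogonal decomposition of the second moment via conditional expectation. -/
private lemma blmu_integral_norm_sq_decomp {m m0 : MeasurableSpace Ω} (hm : m ≤ m0)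
    {μ : Measure Ω} [IsProbabilityMeasure μ] {d : ℕ}
    {X Y : Ω → EuclideanSpace ℝ (Fin d)}
    (hX : MemLp X 2 μ) (hY : MemLp Y 2 μ) (hYm : StronglyMeasurable[m] Y)
    (hcond : μ[X|m] =ᵐ[μ] Y) :
    ∫ ω, ‖X ω‖ ^ 2 ∂μ = ∫ ω, ‖X ω - Y ω‖ ^ 2 ∂μ + ∫ ω, ‖Y ω‖ ^ 2 ∂μ := by
  have hXY : MemLp (fun ω => X ω - Y ω) 2 μ := hX.sub hY
  have hpt : ∀ ω, ‖X ω‖ ^ 2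
      = ‖X ω - Y ω‖ ^ 2 + (2 * (inner ℝ (X ω) (Y ω) : ℝ) - ‖Y ω‖ ^ 2) := by
    intro ω
    have h := norm_sub_sq_real (X ω) (Y ω)
    linarith
  have h1 : ∫ ω, ‖X ω‖ ^ 2 ∂μ
      = ∫ ω, (‖X ω - Y ω‖ ^ 2 + (2 * (inner ℝ (X ω) (Y ω) : ℝ) - ‖Y ω‖ ^ 2)) ∂μ :=
    integral_congr_ae (Filter.Eventually.of_forall hpt)
  have h2a : Integrable (fun ω => 2 * (inner ℝ (X ω) (Y ω) : ℝ)) μ :=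
    (blmu_innerIntegrable hX hY).const_mul 2
  have h2b : Integrable (fun ω => ‖Y ω‖ ^ 2) μ := blmu_normSqIntegrable hY
  have h2 : Integrable (fun ω => 2 * (inner ℝ (X ω) (Y ω) : ℝ) - ‖Y ω‖ ^ 2) μ := h2a.sub h2b
  rw [h1, integral_add (blmu_normSqIntegrable hXY) h2, integral_sub h2a h2b,
    integral_const_mul, blmu_integral_inner_eq_norm_sq hm hX hY hYm hcond]
  ring

end Helpers

/-- Bounded Local Model Update lemma: with `d_i := (1/τ)·Σ_{s<τ} g_i^s`, under smoothness,
bounded dissimilarity, conditionally unbiased stochastic gradients with bounded variance,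
`(1/n)·Σ_i E‖d_i‖² ≤ (2L²/(nτ))·Σ_i Σ_{s<τ} E‖θ − θ_i^s‖² + 2·(β²·‖∇f(θ)‖² + κ²) + ζ̄²`. -/
theorem bounded_local_model_update {Ω : Type*} {mΩ : MeasurableSpace Ω}
    (P : Measure Ω) [IsProbabilityMeasure P]
    (n d τ : ℕ) (hn : 1 ≤ n) (hd : 1 ≤ d) (hτ : 1 ≤ τ)
    (L β κ η : ℝ) (ζ : Fin n → ℝ)
    (hL : 0 < L) (hβ : 1 ≤ β) (hκ : 0 ≤ κ) (hζ : ∀ i, 0 ≤ ζ i)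
    (hη0 : 0 < η)
    (θ : EuclideanSpace ℝ (Fin d))
    (f : Fin n → EuclideanSpace ℝ (Fin d) → ℝ)
    (hdiff : ∀ i, Differentiable ℝ (f i))
    (hlip : ∀ i, LipschitzWith (Real.toNNReal L) (gradient (f i)))
    (hdissim : ∀ x : EuclideanSpace ℝ (Fin d),
      (1 / (n : ℝ)) * ∑ i, ‖gradient (f i) x‖ ^ 2 ≤
        β ^ 2 * ‖gradient (fun y => (1 / (n : ℝ)) * ∑ i, f i y) x‖ ^ 2 + κ ^ 2)
    (ℱ : Filtration ℕ mΩ)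
    (θ' g : Fin n → ℕ → Ω → EuclideanSpace ℝ (Fin d))
    (hinit : ∀ i, θ' i 0 = fun _ => θ)
    (hupdate : ∀ i, ∀ s < τ, θ' i (s + 1) = fun ω => θ' i s ω - η • g i s ω)
    (hmeas : ∀ i, ∀ s ≤ τ, StronglyMeasurable[ℱ s] (θ' i s))
    (hunbiased : ∀ i, ∀ s < τ,
      P[g i s|ℱ s] =ᵐ[P] fun ω => gradient (f i) (θ' i s ω))
    (hvar : ∀ i, ∀ s < τ,
      ∫ ω, ‖g i s ω - gradient (f i) (θ' i s ω)‖ ^ 2 ∂P ≤ (ζ i) ^ 2)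
    (hL2θ : ∀ i, ∀ s ≤ τ, MemLp (θ' i s) 2 P)
    (hL2g : ∀ i, ∀ s < τ, MemLp (g i s) 2 P) :
    (1 / (n : ℝ)) *
        ∑ i, ∫ ω, ‖(1 / (τ : ℝ)) • ∑ s ∈ Finset.range τ, g i s ω‖ ^ 2 ∂P ≤
      (2 * L ^ 2 / ((n : ℝ) * τ)) *
          ∑ i, ∑ s ∈ Finset.range τ, ∫ ω, ‖θ - θ' i s ω‖ ^ 2 ∂P
        + 2 * (β ^ 2 * ‖gradient (fun y => (1 / (n : ℝ)) * ∑ i, f i y) θ‖ ^ 2 + κ ^ 2)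
        + (1 / (n : ℝ)) * ∑ i, (ζ i) ^ 2 := by
  have hT : (0 : ℝ) < τ := by exact_mod_cast hτ
  have hN : (0 : ℝ) < n := by exact_mod_cast hn
  set G : ℝ := ‖gradient (fun y => (1 / (n : ℝ)) * ∑ i, f i y) θ‖ ^ 2 with hG
  -- second moment bound for each stochastic gradient
  have keyB : ∀ i, ∀ s < τ, ∫ ω, ‖g i s ω‖ ^ 2 ∂P ≤
      (ζ i) ^ 2 + (2 * L ^ 2 * ∫ ω, ‖θ - θ' i s ω‖ ^ 2 ∂P
        + 2 * ‖gradient (f i) θ‖ ^ 2) := by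
    intro i s hs
    set M : Ω → EuclideanSpace ℝ (Fin d) := fun ω => gradient (f i) (θ' i s ω) with hM
    have hMm : StronglyMeasurable[ℱ s] M :=
      (hlip i).continuous.comp_stronglyMeasurable (hmeas i s hs.le)
    have hM2 : MemLp M 2 P := by
      have h1 : MemLp (θ' i s) 2 P := hL2θ i s hs.le
      have hlip0 : LipschitzWith (Real.toNNReal L)
          (fun x => gradient (f i) x - gradient (f i) 0) := fun x y => by
        simpa [edist_sub_right] using hlip i x y
      have h2 := (hlip0.comp_memLp (by simp) h1).add (memLp_const (gradient (f i) 0))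
      have h3 : ((fun x => gradient (f i) x - gradient (f i) 0) ∘ θ' i s
          + fun _ => gradient (f i) 0) = M := by
        funext ω; simp [hM, Function.comp]
      exact h3 ▸ h2
    have hdecomp := blmu_integral_norm_sq_decomp (ℱ.le s) (hL2g i s hs) hM2 hMm
      (hunbiased i s hs)
    have hvar' : ∫ ω, ‖g i s ω - M ω‖ ^ 2 ∂P ≤ (ζ i) ^ 2 := hvar i s hs
    -- bound on ∫ ‖M‖²
    have hθc : MemLp (fun ω => θ - θ' i s ω) 2 P := (memLp_const θ).sub (hL2θ i s hs.le)
    have hint : Integrable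
        (fun ω => 2 * L ^ 2 * ‖θ - θ' i s ω‖ ^ 2 + 2 * ‖gradient (f i) θ‖ ^ 2) P :=
      ((blmu_normSqIntegrable hθc).const_mul _).add (integrable_const _)
    have hMbound : ∫ ω, ‖M ω‖ ^ 2 ∂P ≤
        2 * L ^ 2 * ∫ ω, ‖θ - θ' i s ω‖ ^ 2 ∂P + 2 * ‖gradient (f i) θ‖ ^ 2 := by
      have hpt : ∀ ω, ‖M ω‖ ^ 2 ≤
          2 * L ^ 2 * ‖θ - θ' i s ω‖ ^ 2 + 2 * ‖gradient (f i) θ‖ ^ 2 := by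
        intro ω
        have h1 : ‖M ω - gradient (f i) θ‖ ≤ L * ‖θ' i s ω - θ‖ := by
          have h := (hlip i).dist_le_mul (θ' i s ω) θ
          rw [dist_eq_norm, dist_eq_norm] at h
          simpa [hM, Real.coe_toNNReal _ hL.le] using h
        have h2 : ‖M ω‖ ≤ L * ‖θ - θ' i s ω‖ + ‖gradient (f i) θ‖ := by
          have h3 : M ω = (M ω - gradient (f i) θ) + gradient (f i) θ := by abel
          calc ‖M ω‖ = ‖(M ω - gradient (f i) θ) + gradient (f i) θ‖ := by rw [← h3]
            _ ≤ ‖M ω - gradient (f i) θ‖ + ‖gradient (f i) θ‖ := norm_add_le _ _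
            _ ≤ L * ‖θ - θ' i s ω‖ + ‖gradient (f i) θ‖ := by
                rw [norm_sub_rev θ]; exact add_le_add_left h1 _
        nlinarith [norm_nonneg (M ω), norm_nonneg (θ - θ' i s ω),
          norm_nonneg (gradient (f i) θ), hL.le,
          sq_nonneg (L * ‖θ - θ' i s ω‖ - ‖gradient (f i) θ‖),
          mul_nonneg (mul_nonneg hL.le (norm_nonneg (θ - θ' i s ω)))
            (norm_nonneg (gradient (f i) θ))]
      calc ∫ ω, ‖M ω‖ ^ 2 ∂P
          ≤ ∫ ω, (2 * L ^ 2 * ‖θ - θ' i s ω‖ ^ 2 + 2 * ‖gradient (f i) θ‖ ^ 2) ∂P :=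
            integral_mono_of_nonneg
              (Filter.Eventually.of_forall fun ω => by positivity) hint
              (Filter.Eventually.of_forall hpt)
        _ = 2 * L ^ 2 * ∫ ω, ‖θ - θ' i s ω‖ ^ 2 ∂P + 2 * ‖gradient (f i) θ‖ ^ 2 := by
            rw [integral_add ((blmu_normSqIntegrable hθc).const_mul _) (integrable_const _),
              integral_const_mul, integral_const]
            simp
    rw [hdecomp]
    exact add_le_add hvar' hMbound
  -- averaging bound (Jensen) for each client
  have keyA : ∀ i : Fin n, ∫ ω, ‖(1 / (τ : ℝ)) • ∑ s ∈ Finset.range τ, g i s ω‖ ^ 2 ∂P ≤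
      (1 / (τ : ℝ)) * ∑ s ∈ Finset.range τ, ∫ ω, ‖g i s ω‖ ^ 2 ∂P := by
    intro i
    have hint : Integrable
        (fun ω => (1 / (τ : ℝ)) * ∑ s ∈ Finset.range τ, ‖g i s ω‖ ^ 2) P := by
      refine Integrable.const_mul ?_ _
      exact integrable_finset_sum _ fun s hs =>
        blmu_normSqIntegrable (hL2g i s (Finset.mem_range.mp hs))
    have hpt : ∀ ω, ‖(1 / (τ : ℝ)) • ∑ s ∈ Finset.range τ, g i s ω‖ ^ 2 ≤
        (1 / (τ : ℝ)) * ∑ s ∈ Finset.range τ, ‖g i s ω‖ ^ 2 := by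
      intro ω
      have h1 : ‖∑ s ∈ Finset.range τ, g i s ω‖ ≤ ∑ s ∈ Finset.range τ, ‖g i s ω‖ :=
        norm_sum_le _ _
      have h2 : (∑ s ∈ Finset.range τ, ‖g i s ω‖) ^ 2 ≤
          (τ : ℝ) * ∑ s ∈ Finset.range τ, ‖g i s ω‖ ^ 2 := by
        simpa using sq_sum_le_card_mul_sum_sq
          (s := Finset.range τ) (f := fun s => ‖g i s ω‖)
      have h3 : ‖∑ s ∈ Finset.range τ, g i s ω‖ ^ 2 ≤
          (τ : ℝ) * ∑ s ∈ Finset.range τ, ‖g i s ω‖ ^ 2 :=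
        le_trans (pow_le_pow_left₀ (norm_nonneg _) h1 2) h2
      rw [norm_smul, Real.norm_eq_abs, abs_of_pos (by positivity), mul_pow]
      calc (1 / (τ : ℝ)) ^ 2 * ‖∑ s ∈ Finset.range τ, g i s ω‖ ^ 2
          ≤ (1 / (τ : ℝ)) ^ 2 * ((τ : ℝ) * ∑ s ∈ Finset.range τ, ‖g i s ω‖ ^ 2) := by
            exact mul_le_mul_of_nonneg_left h3 (by positivity)
        _ = (1 / (τ : ℝ)) * ∑ s ∈ Finset.range τ, ‖g i s ω‖ ^ 2 := by
            field_simp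
    calc ∫ ω, ‖(1 / (τ : ℝ)) • ∑ s ∈ Finset.range τ, g i s ω‖ ^ 2 ∂P
        ≤ ∫ ω, (1 / (τ : ℝ)) * ∑ s ∈ Finset.range τ, ‖g i s ω‖ ^ 2 ∂P :=
          integral_mono_of_nonneg
            (Filter.Eventually.of_forall fun ω => by positivity) hint
            (Filter.Eventually.of_forall hpt)
      _ = (1 / (τ : ℝ)) * ∑ s ∈ Finset.range τ, ∫ ω, ‖g i s ω‖ ^ 2 ∂P := by
          rw [integral_const_mul, integral_finset_sum _ fun s hs =>
            blmu_normSqIntegrable (hL2g i s (Finset.mem_range.mp hs))]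
  -- per-client bound
  set A : Fin n → ℝ := fun i => ∑ s ∈ Finset.range τ, ∫ ω, ‖θ - θ' i s ω‖ ^ 2 ∂P with hA
  have keyI : ∀ i : Fin n, ∫ ω, ‖(1 / (τ : ℝ)) • ∑ s ∈ Finset.range τ, g i s ω‖ ^ 2 ∂P ≤
      (ζ i) ^ 2 + 2 * ‖gradient (f i) θ‖ ^ 2 + (2 * L ^ 2 / (τ : ℝ)) * A i := by
    intro i
    refine le_trans (keyA i) ?_
    have hsum : ∑ s ∈ Finset.range τ, ∫ ω, ‖g i s ω‖ ^ 2 ∂P ≤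
        ∑ s ∈ Finset.range τ, ((ζ i) ^ 2 + (2 * L ^ 2 * ∫ ω, ‖θ - θ' i s ω‖ ^ 2 ∂P
          + 2 * ‖gradient (f i) θ‖ ^ 2)) :=
      Finset.sum_le_sum fun s hs => keyB i s (Finset.mem_range.mp hs)
    have heq : ∑ s ∈ Finset.range τ, ((ζ i) ^ 2 + (2 * L ^ 2 * ∫ ω, ‖θ - θ' i s ω‖ ^ 2 ∂P
          + 2 * ‖gradient (f i) θ‖ ^ 2))
        = (τ : ℝ) * ((ζ i) ^ 2 + 2 * ‖gradient (f i) θ‖ ^ 2)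
          + 2 * L ^ 2 * A i := by
      rw [Finset.sum_add_distrib, Finset.sum_const, Finset.card_range]
      rw [Finset.sum_add_distrib, Finset.sum_const, Finset.card_range, ← Finset.mul_sum]
      push_cast
      ring
    calc (1 / (τ : ℝ)) * ∑ s ∈ Finset.range τ, ∫ ω, ‖g i s ω‖ ^ 2 ∂P
        ≤ (1 / (τ : ℝ)) * ((τ : ℝ) * ((ζ i) ^ 2 + 2 * ‖gradient (f i) θ‖ ^ 2)
            + 2 * L ^ 2 * A i) := by
          rw [← heq]
          exact mul_le_mul_of_nonneg_left hsum (by positivity)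
      _ = (ζ i) ^ 2 + 2 * ‖gradient (f i) θ‖ ^ 2 + (2 * L ^ 2 / (τ : ℝ)) * A i := by
          field_simp
  -- combine over clients
  have hsumI : (1 / (n : ℝ)) *
      ∑ i, ∫ ω, ‖(1 / (τ : ℝ)) • ∑ s ∈ Finset.range τ, g i s ω‖ ^ 2 ∂P ≤
      (1 / (n : ℝ)) * ∑ i, ((ζ i) ^ 2 + 2 * ‖gradient (f i) θ‖ ^ 2
        + (2 * L ^ 2 / (τ : ℝ)) * A i) :=
    mul_le_mul_of_nonneg_left (Finset.sum_le_sum fun i _ => keyI i) (by positivity)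
  have hsplit : (1 / (n : ℝ)) * ∑ i, ((ζ i) ^ 2 + 2 * ‖gradient (f i) θ‖ ^ 2
        + (2 * L ^ 2 / (τ : ℝ)) * A i)
      = (1 / (n : ℝ)) * ∑ i, (ζ i) ^ 2
        + 2 * ((1 / (n : ℝ)) * ∑ i, ‖gradient (f i) θ‖ ^ 2)
        + (2 * L ^ 2 / ((n : ℝ) * τ)) * ∑ i, A i := by
    rw [Finset.sum_add_distrib, Finset.sum_add_distrib, ← Finset.mul_sum, ← Finset.mul_sum]
    field_simp
  have hdis := hdissim θ
  calc (1 / (n : ℝ)) *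
        ∑ i, ∫ ω, ‖(1 / (τ : ℝ)) • ∑ s ∈ Finset.range τ, g i s ω‖ ^ 2 ∂P
      ≤ (1 / (n : ℝ)) * ∑ i, (ζ i) ^ 2
        + 2 * ((1 / (n : ℝ)) * ∑ i, ‖gradient (f i) θ‖ ^ 2)
        + (2 * L ^ 2 / ((n : ℝ) * τ)) * ∑ i, A i := by
        rw [← hsplit]; exact hsumI
    _ ≤ (2 * L ^ 2 / ((n : ℝ) * τ)) * ∑ i, A i + 2 * (β ^ 2 * G + κ ^ 2)
        + (1 / (n : ℝ)) * ∑ i, (ζ i) ^ 2 := by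
        have h2 : 2 * ((1 / (n : ℝ)) * ∑ i, ‖gradient (f i) θ‖ ^ 2)
            ≤ 2 * (β ^ 2 * G + κ ^ 2) := by
          have := hdissim θ
          rw [hG]
          linarith
        linarith
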